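/- Let φ : R^m → R be the pointwise minimum of finitely many convex functions φ_1, ..., φ_k, and let ξ* be a point such that every one-sided directional derivative of φ at ξ* is nonnegative (a d-stationary point). Then ξ* is a local minimizer of φ. -/

import Mathlib

/-- Composition of a convex function with the affine map `τ ↦ ξ + τ • d` is convex. -/
lemma convexOn_line_comp {m : ℕ} (f : EuclideanSpace ℝ (Fin m) → ℝ)
    (hf : ConvexOn ℝ Set.univ f) (ξ d : EuclideanSpace ℝ (Fin m)) :
    ConvexOn ℝ Set.univ (fun τ : ℝ => f (ξ + τ • d)) := by
  have h := hf.comp_affineMap (AffineMap.lineMap ξ (ξ + d) : ℝ →ᵃ[ℝ] _)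
  have he : (f ∘ ⇑(AffineMap.lineMap ξ (ξ + d))) = fun τ : ℝ => f (ξ + τ • d) := by
    funext τ
    simp [Function.comp, AffineMap.lineMap_apply]
    rw [add_comm]
  rw [he] at h
  simpa using h

/-- Slope through 0 of a convex function on ℝ is monotone on `Ioi 0`. -/
lemma slope_zero_mono {g : ℝ → ℝ} (hg : ConvexOn ℝ Set.univ g) {a b : ℝ}
    (ha : 0 < a) (hab : a ≤ b) : (g a - g 0) / a ≤ (g b - g 0) / b := by
  rcases eq_or_lt_of_le hab with rfl | hab
  · exact le_refl _
  · have hb : 0 < b := ha.trans hab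
    have h1 := hg.slope_mono_adjacent (Set.mem_univ (0 : ℝ)) (Set.mem_univ b) ha hab
    rw [div_le_div_iff₀ ha hb]
    rw [div_le_div_iff₀ (by linarith : (0:ℝ) < a - 0) (by linarith : (0:ℝ) < b - a)] at h1
    nlinarith

/-- Slope through 0 of a convex function on ℝ is bounded below on `Ioi 0`. -/
lemma slope_zero_bddBelow {g : ℝ → ℝ} (hg : ConvexOn ℝ Set.univ g) {a : ℝ} (ha : 0 < a) :
    g 0 - g (-1) ≤ (g a - g 0) / a := by
  have h1 := hg.slope_mono_adjacent (Set.mem_univ (-1 : ℝ)) (Set.mem_univ a)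
    (by norm_num : (-1:ℝ) < 0) ha
  have : (g 0 - g (-1)) / (0 - (-1)) = g 0 - g (-1) := by norm_num
  rw [this] at h1
  simpa using h1

/-- a d-stationary point of a pointwise minimum of finitely many convex
functions is a local minimizer. -/
theorem stmt_19 (m k : ℕ) (hk : 0 < k)
    (φs : Fin k → EuclideanSpace ℝ (Fin m) → ℝ)
    (hconv : ∀ j, ConvexOn ℝ Set.univ (φs j))
    (φ : EuclideanSpace ℝ (Fin m) → ℝ)
    (hφ : φ = fun x => sInf (Set.range fun j => φs j x))
    (ξ : EuclideanSpace ℝ (Fin m))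
    (hstat : ∀ (dvec : EuclideanSpace ℝ (Fin m)) (c : ℝ),
      Filter.Tendsto (fun τ : ℝ => (φ (ξ + τ • dvec) - φ ξ) / τ)
        (nhdsWithin 0 (Set.Ioi 0)) (nhds c) → 0 ≤ c) :
    ∃ ε : ℝ, 0 < ε ∧ ∀ ζ : EuclideanSpace ℝ (Fin m), ‖ζ - ξ‖ < ε → φ ξ ≤ φ ζ := by
  haveI : Nonempty (Fin k) := ⟨⟨0, hk⟩⟩
  -- basic facts about φ as pointwise min
  have hle : ∀ x j, φ x ≤ φs j x := by
    intro x j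
    rw [hφ]
    exact csInf_le (Set.finite_range _).bddBelow ⟨j, rfl⟩
  have hmem : ∀ x, ∃ j, φ x = φs j x := by
    intro x
    have h := (Set.range_nonempty (fun j => φs j x)).csInf_mem (Set.finite_range _)
    rw [hφ]
    obtain ⟨j, hj⟩ := h
    exact ⟨j, hj.symm⟩
  -- continuity of each φs j
  have hcont : ∀ j, Continuous (φs j) := by
    intro j
    rw [← continuousOn_univ]
    exact (hconv j).continuousOn isOpen_univ
  -- directional derivative of each φs j
  set c : Fin k → EuclideanSpace ℝ (Fin m) → ℝ :=
    fun j d => sInf ((fun τ => (φs j (ξ + τ • d) - φs j ξ) / τ) '' Set.Ioi 0) with hc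
  have hgconv : ∀ j d, ConvexOn ℝ Set.univ (fun τ : ℝ => φs j (ξ + τ • d)) :=
    fun j d => convexOn_line_comp (φs j) (hconv j) ξ d
  have hg0 : ∀ j (d : EuclideanSpace ℝ (Fin m)), φs j (ξ + (0:ℝ) • d) = φs j ξ := by
    intro j d; simp
  have hbdd : ∀ j d, BddBelow ((fun τ => (φs j (ξ + τ • d) - φs j ξ) / τ) '' Set.Ioi 0) := by
    intro j d
    refine ⟨φs j (ξ + (0:ℝ) • d) - φs j (ξ + (-1:ℝ) • d), ?_⟩
    rintro y ⟨τ, hτ, rfl⟩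
    have := slope_zero_bddBelow (hgconv j d) hτ
    rw [hg0 j d] at this ⊢
    exact this
  have hcle : ∀ j d τ, 0 < τ → c j d ≤ (φs j (ξ + τ • d) - φs j ξ) / τ := by
    intro j d τ hτ
    exact csInf_le (hbdd j d) ⟨τ, hτ, rfl⟩
  have htendsto : ∀ j d, Filter.Tendsto (fun τ => (φs j (ξ + τ • d) - φs j ξ) / τ)
      (nhdsWithin 0 (Set.Ioi 0)) (nhds (c j d)) := by
    intro j d
    refine MonotoneOn.tendsto_nhdsGT ?_ (hbdd j d)
    intro a ha b hb hab
    have := slope_zero_mono (hgconv j d) ha hab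
    rw [hg0 j d] at this
    exact this
  -- the active set
  set A : Finset (Fin k) := Finset.univ.filter (fun j => φs j ξ = φ ξ) with hA
  have hAmem : ∀ j, j ∈ A ↔ φs j ξ = φ ξ := by
    intro j; simp [hA]
  have hAne : A.Nonempty := by
    obtain ⟨j, hj⟩ := hmem ξ
    exact ⟨j, (hAmem j).mpr hj.symm⟩
  -- key: every active directional derivative is nonnegative
  have hkey : ∀ (d : EuclideanSpace ℝ (Fin m)), ∀ j ∈ A, 0 ≤ c j d := by
    intro d
    obtain ⟨j₀, hj₀A, hj₀min⟩ := A.exists_min_image (fun j => c j d) hAne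
    have hj₀ : φs j₀ ξ = φ ξ := (hAmem j₀).mp hj₀A
    -- squeeze: the slope of φ tends to c j₀ d
    have hlower : ∀ᶠ τ in nhdsWithin (0:ℝ) (Set.Ioi 0),
        c j₀ d ≤ (φ (ξ + τ • d) - φ ξ) / τ := by
      have hev : ∀ᶠ τ in nhdsWithin (0:ℝ) (Set.Ioi 0),
          ∀ j : Fin k, j ∉ A → φ ξ + τ * c j₀ d < φs j (ξ + τ • d) := by
        rw [Filter.eventually_all]
        intro j
        by_cases hjA : j ∈ A
        · exact Filter.Eventually.of_forall (fun τ h => absurd hjA h)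
        · have hgt : φ ξ < φs j ξ := lt_of_le_of_ne (hle ξ j)
            (fun h => hjA ((hAmem j).mpr h.symm))
          have hct : Filter.Tendsto (fun τ : ℝ => φs j (ξ + τ • d) - τ * c j₀ d)
              (nhdsWithin (0:ℝ) (Set.Ioi 0)) (nhds (φs j ξ)) := by
            have hl1 : Continuous (fun τ : ℝ => ξ + τ • d) :=
              continuous_const.add (continuous_id.smul continuous_const)
            have h1 : Continuous (fun τ : ℝ => φs j (ξ + τ • d) - τ * c j₀ d) :=
              ((hcont j).comp hl1).sub (continuous_id.mul continuous_const)
            have := h1.continuousAt (x := (0:ℝ))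
            have h2 := this.tendsto
            simp only [zero_smul, add_zero, zero_mul, sub_zero] at h2
            exact h2.mono_left nhdsWithin_le_nhds
          filter_upwards [hct.eventually_const_lt hgt] with τ h _
          linarith
      filter_upwards [hev, self_mem_nhdsWithin] with τ hev hτ
      have hτ' : (0:ℝ) < τ := hτ
      obtain ⟨i, hi⟩ := hmem (ξ + τ • d)
      by_cases hiA : i ∈ A
      · have h1 : c i d ≤ (φs i (ξ + τ • d) - φs i ξ) / τ := hcle i d τ hτ'
        have h2 : c j₀ d ≤ c i d := hj₀min i hiA
        rw [hi, ← (hAmem i).mp hiA] at *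
        linarith
      · have := hev i hiA
        rw [← hi] at this
        rw [le_div_iff₀ hτ']
        linarith [mul_comm τ (c j₀ d)]
    have hupper : ∀ᶠ τ in nhdsWithin (0:ℝ) (Set.Ioi 0),
        (φ (ξ + τ • d) - φ ξ) / τ ≤ (φs j₀ (ξ + τ • d) - φs j₀ ξ) / τ := by
      filter_upwards [self_mem_nhdsWithin] with τ hτ
      have hτ' : (0:ℝ) < τ := hτ
      refine (div_le_div_iff_of_pos_right hτ').mpr ?_
      have := hle (ξ + τ • d) j₀
      linarith
    have hsq : Filter.Tendsto (fun τ : ℝ => (φ (ξ + τ • d) - φ ξ) / τ)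
        (nhdsWithin 0 (Set.Ioi 0)) (nhds (c j₀ d)) := by
      refine tendsto_of_tendsto_of_tendsto_of_le_of_le' tendsto_const_nhds
        (htendsto j₀ d) hlower hupper
    have h0 : 0 ≤ c j₀ d := hstat d (c j₀ d) hsq
    intro j hjA
    exact h0.trans (hj₀min j hjA)
  -- active functions are globally ≥ φ ξ
  have hglobal : ∀ j ∈ A, ∀ ζ, φ ξ ≤ φs j ζ := by
    intro j hjA ζ
    have h1 := hcle j (ζ - ξ) 1 one_pos
    have h2 := hkey (ζ - ξ) j hjA
    simp only [one_smul, div_one, add_sub_cancel] at h1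
    have := (hAmem j).mp hjA
    linarith
  -- choose ε for inactive functions
  have hinactive : ∀ j : Fin k, ∃ εj : ℝ, 0 < εj ∧
      (j ∉ A → ∀ ζ, ‖ζ - ξ‖ < εj → φ ξ < φs j ζ) := by
    intro j
    by_cases hjA : j ∈ A
    · exact ⟨1, one_pos, fun h => absurd hjA h⟩
    · have hgt : φ ξ < φs j ξ := lt_of_le_of_ne (hle ξ j)
        (fun h => hjA ((hAmem j).mpr h.symm))
      have := ((hcont j).continuousAt (x := ξ)).eventually_const_lt hgt
      obtain ⟨εj, hεj, hball⟩ := Metric.eventually_nhds_iff.mp this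
      refine ⟨εj, hεj, fun _ ζ hζ => hball ?_⟩
      rwa [dist_eq_norm]
  choose εf hεfpos hεf using hinactive
  refine ⟨Finset.univ.inf' Finset.univ_nonempty εf, ?_, ?_⟩
  · exact Finset.lt_inf'_iff _ |>.mpr (fun j _ => hεfpos j)
  · intro ζ hζ
    obtain ⟨i, hi⟩ := hmem ζ
    rw [hi]
    by_cases hiA : i ∈ A
    · exact hglobal i hiA ζ
    · refine (hεf i hiA ζ ?_).le
      exact hζ.trans_le (Finset.inf'_le _ (Finset.mem_univ i))
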